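/- The operation (F', f', A')·(F, f, A) = ( F' + A'·F + Υ_{f'} ∘ (A'·f) − Υ_{A'·f} ∘ f', f' + A'·f, A'A ) makes the set Hom_R(H, 𝔱) × Hom_R(H, Λ²H) × GL(H) into a group, where A'·f and A'·F denote the natural GL(H)-actions given by (A·f)(u) = Λ²A(f(A⁻¹u)) and (A·F)(u) = (A ⊗ Λ²A)(F(A⁻¹u)). -/

import Mathlib

namespace Paper

open ExteriorAlgebra

open scoped TensorProduct

variable {R : Type*} [CommRing R] {H : Type*} [AddCommGroup H] [Module R H]

theorem wedge_mem (v w : H) : ι R v * ι R w ∈ ⋀[R]^2 H := by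
  rw [show (⋀[R]^2 H) = LinearMap.range (ι R (M := H)) * LinearMap.range (ι R (M := H)) from
    sq _]
  exact Submodule.mul_mem_mul (LinearMap.mem_range_self _ v) (LinearMap.mem_range_self _ w)

/-- The wedge product `H × H → Λ²H` as a bilinear map. -/
noncomputable def wedge : H →ₗ[R] H →ₗ[R] ↥(⋀[R]^2 H) :=
  LinearMap.mk₂ R (fun v w => ⟨ι R v * ι R w, wedge_mem v w⟩)
    (fun v v' w => Subtype.ext (by simp [add_mul]))
    (fun c v w => Subtype.ext (by simp [smul_mul_assoc]))
    (fun v w w' => Subtype.ext (by simp [mul_add]))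
    (fun c v w => Subtype.ext (by simp [mul_smul_comm]))

/-- The submodule `𝔱 ⊆ H ⊗ Λ²H` spanned by the elements `u⊗(v∧w) − v⊗(w∧u)`. -/
noncomputable def tSub (R : Type*) [CommRing R] (H : Type*) [AddCommGroup H] [Module R H] :
    Submodule R (H ⊗[R] ↥(⋀[R]^2 H)) :=
  Submodule.span R
    {x | ∃ u v w : H, x = u ⊗ₜ[R] (wedge v w) - v ⊗ₜ[R] (wedge w u)}

theorem map_exteriorPower_le (f : H →ₗ[R] H) (n : ℕ) :
    Submodule.map (ExteriorAlgebra.map f).toLinearMap (⋀[R]^n H) ≤ ⋀[R]^n H := by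
  rw [show ((⋀[R]^n H : Submodule R (ExteriorAlgebra R H))) =
      (LinearMap.range (ι R (M := H))) ^ n from rfl, Submodule.map_pow]
  have h1 : Submodule.map (ExteriorAlgebra.map f).toLinearMap
      (LinearMap.range (ι R (M := H))) ≤ LinearMap.range (ι R (M := H)) := by
    intro x hx
    rw [Submodule.mem_map] at hx
    obtain ⟨y, hy, rfl⟩ := hx
    rw [LinearMap.mem_range] at hy
    obtain ⟨v, rfl⟩ := hy
    exact ⟨f v, (map_apply_ι f v).symm⟩
  induction n with
  | zero => simp
  | succ n ih =>
      rw [pow_succ, pow_succ]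
      exact mul_le_mul' ih h1

/-- The endomorphism `Λ²f` of `Λ²H` induced by an endomorphism `f` of `H`. -/
noncomputable def map2 (f : H →ₗ[R] H) : ↥(⋀[R]^2 H) →ₗ[R] ↥(⋀[R]^2 H) :=
  (ExteriorAlgebra.map f).toLinearMap.restrict (p := ⋀[R]^2 H) (q := ⋀[R]^2 H)
    (fun x hx => map_exteriorPower_le f 2 (Submodule.mem_map_of_mem hx))

theorem map2_wedge (f : H →ₗ[R] H) (v w : H) :
    map2 f (wedge (R := R) v w) = wedge (R := R) (f v) (f w) :=
  Subtype.ext (by simp [map2, LinearMap.restrict_apply, wedge, map_apply_ι])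

theorem tSub_stable (A : H →ₗ[R] H) (x : H ⊗[R] ↥(⋀[R]^2 H)) (hx : x ∈ tSub R H) :
    TensorProduct.map A (map2 A) x ∈ tSub R H := by
  induction hx using Submodule.span_induction with
  | mem y hy =>
      obtain ⟨u, v, w, rfl⟩ := hy
      rw [map_sub, TensorProduct.map_tmul, TensorProduct.map_tmul, map2_wedge, map2_wedge]
      exact Submodule.subset_span ⟨A u, A v, A w, rfl⟩
  | zero => simpa using Submodule.zero_mem _
  | add a b ha hb iha ihb => rw [map_add]; exact Submodule.add_mem _ iha ihb
  | smul c a ha iha => rw [map_smul]; exact Submodule.smul_mem _ _ iha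

/-- The action of an endomorphism `A` of `H` on `𝔱 ⊆ H ⊗ Λ²H`, by `A ⊗ Λ²A`. -/
noncomputable def tRestrict (A : H →ₗ[R] H) : ↥(tSub R H) →ₗ[R] ↥(tSub R H) :=
  (TensorProduct.map A (map2 A)).restrict (p := tSub R H) (q := tSub R H) (tSub_stable A)


/-- Helper instances for the submodule `𝔱` (typeclass search struggles with the nested
subtype). -/
noncomputable instance tSubAddCommGroup : AddCommGroup ↥(tSub R H) :=
  @Submodule.addCommGroup R (H ⊗[R] ↥(⋀[R]^2 H)) _ _ _ (tSub R H)

noncomputable instance tSubModule : Module R ↥(tSub R H) :=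
  @Submodule.module R (H ⊗[R] ↥(⋀[R]^2 H)) _ _ _ (tSub R H)

theorem mem_sq {x : ExteriorAlgebra R H}
    (hx : x ∈ LinearMap.range (ι R (M := H)) * LinearMap.range (ι R (M := H))) :
    x ∈ ⋀[R]^2 H := by
  rw [show (⋀[R]^2 H) = LinearMap.range (ι R (M := H)) * LinearMap.range (ι R (M := H)) from
    sq _]
  exact hx

theorem hom_ext2 {M : Type*} [AddCommGroup M] [Module R M]
    {φ ψ : ↥(⋀[R]^2 H) →ₗ[R] M}
    (h : ∀ u v : H, φ (wedge (R := R) u v) = ψ (wedge (R := R) u v)) : φ = ψ := by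
  refine LinearMap.ext fun x => ?_
  obtain ⟨x, hx⟩ := x
  have hx2 : x ∈ LinearMap.range (ι R (M := H)) * LinearMap.range (ι R (M := H)) := by
    have := hx
    rwa [show (⋀[R]^2 H) = LinearMap.range (ι R (M := H)) * LinearMap.range (ι R (M := H)) from
      sq _] at this
  refine Submodule.mul_induction_on'
    (C := fun r _ => ∀ h2 : r ∈ ⋀[R]^2 H, φ ⟨r, h2⟩ = ψ ⟨r, h2⟩) ?_ ?_ hx2 hx
  · rintro _ ⟨u, rfl⟩ _ ⟨v, rfl⟩ h2
    exact h u v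
  · intro a ha b hb iha ihb h2
    have ha2 : a ∈ ⋀[R]^2 H := mem_sq ha
    have hb2 : b ∈ ⋀[R]^2 H := mem_sq hb
    have e : (⟨a + b, h2⟩ : ↥(⋀[R]^2 H)) = ⟨a, ha2⟩ + ⟨b, hb2⟩ := rfl
    rw [e, map_add, map_add, iha ha2, ihb hb2]

theorem map2_id : map2 (LinearMap.id : H →ₗ[R] H) = LinearMap.id :=
  hom_ext2 fun u v => by simp [map2_wedge]

theorem map2_comp (A B : H →ₗ[R] H) : map2 (A ∘ₗ B) = map2 A ∘ₗ map2 B :=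
  hom_ext2 fun u v => by simp [map2_wedge]

theorem tRestrict_coe (A : H →ₗ[R] H) (x : ↥(tSub R H)) :
    (tRestrict A x : H ⊗[R] ↥(⋀[R]^2 H)) = TensorProduct.map A (map2 A) x := rfl

theorem tRestrict_id : tRestrict (LinearMap.id : H →ₗ[R] H) = LinearMap.id := by
  ext x
  show (tRestrict LinearMap.id x : H ⊗[R] ↥(⋀[R]^2 H)) = x
  rw [tRestrict_coe, map2_id, TensorProduct.map_id]
  rfl

theorem tRestrict_comp (A B : H →ₗ[R] H) :
    tRestrict (A ∘ₗ B) = tRestrict A ∘ₗ tRestrict B := by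
  ext x
  show (tRestrict (A ∘ₗ B) x : H ⊗[R] ↥(⋀[R]^2 H)) = (tRestrict A (tRestrict B x) : _)
  rw [tRestrict_coe, tRestrict_coe, tRestrict_coe, map2_comp, TensorProduct.map_comp]
  rfl

section A3

variable [Invertible (2 : R)] [Invertible (3 : R)]

/-- The action `(A·f)(u) = Λ²A(f(A⁻¹u))` of `GL(H)` on `Hom(H, Λ²H)`. -/
noncomputable def actf (A : H ≃ₗ[R] H) (f : H →ₗ[R] ↥(⋀[R]^2 H)) : H →ₗ[R] ↥(⋀[R]^2 H) :=
  map2 (A : H →ₗ[R] H) ∘ₗ f ∘ₗ (A.symm : H →ₗ[R] H)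

/-- The action `(A·F)(u) = (A ⊗ Λ²A)(F(A⁻¹u))` of `GL(H)` on `Hom(H, 𝔱)`. -/
noncomputable def actF (A : H ≃ₗ[R] H) (F : H →ₗ[R] ↥(tSub R H)) : H →ₗ[R] ↥(tSub R H) :=
  tRestrict (A : H →ₗ[R] H) ∘ₗ F ∘ₗ (A.symm : H →ₗ[R] H)

theorem coe_one_lin : ((1 : H ≃ₗ[R] H) : H →ₗ[R] H) = LinearMap.id := rfl

theorem coe_one_symm : (((1 : H ≃ₗ[R] H)).symm : H →ₗ[R] H) = LinearMap.id := rfl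

theorem coe_mul_lin (A B : H ≃ₗ[R] H) :
    ((A * B : H ≃ₗ[R] H) : H →ₗ[R] H) = (A : H →ₗ[R] H) ∘ₗ (B : H →ₗ[R] H) := rfl

theorem coe_mul_symm (A B : H ≃ₗ[R] H) :
    (((A * B : H ≃ₗ[R] H)).symm : H →ₗ[R] H) =
      (B.symm : H →ₗ[R] H) ∘ₗ (A.symm : H →ₗ[R] H) := rfl

theorem actf_one (f : H →ₗ[R] ↥(⋀[R]^2 H)) : actf 1 f = f := by
  unfold actf
  rw [coe_one_lin, coe_one_symm, map2_id]
  ext u; simp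

theorem actf_mul (A B : H ≃ₗ[R] H) (f : H →ₗ[R] ↥(⋀[R]^2 H)) :
    actf (A * B) f = actf A (actf B f) := by
  unfold actf
  rw [coe_mul_lin, coe_mul_symm, map2_comp]
  simp only [LinearMap.comp_assoc]

theorem actf_add (A : H ≃ₗ[R] H) (f g : H →ₗ[R] ↥(⋀[R]^2 H)) :
    actf A (f + g) = actf A f + actf A g := by
  ext u; simp [actf]

theorem actf_zero (A : H ≃ₗ[R] H) : actf A (0 : H →ₗ[R] ↥(⋀[R]^2 H)) = 0 := by
  ext u; simp [actf]

theorem actf_neg (A : H ≃ₗ[R] H) (f : H →ₗ[R] ↥(⋀[R]^2 H)) :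
    actf A (-f) = -actf A f := by
  ext u; simp [actf]

theorem actF_one (F : H →ₗ[R] ↥(tSub R H)) : actF 1 F = F := by
  unfold actF
  rw [coe_one_lin, coe_one_symm, tRestrict_id]
  ext u; simp

theorem actF_mul (A B : H ≃ₗ[R] H) (F : H →ₗ[R] ↥(tSub R H)) :
    actF (A * B) F = actF A (actF B F) := by
  unfold actF
  rw [coe_mul_lin, coe_mul_symm, tRestrict_comp]
  simp only [LinearMap.comp_assoc]

theorem actF_add (A : H ≃ₗ[R] H) (F G : H →ₗ[R] ↥(tSub R H)) :
    actF A (F + G) = actF A F + actF A G := by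
  ext u; simp [actF]

theorem actF_sub (A : H ≃ₗ[R] H) (F G : H →ₗ[R] ↥(tSub R H)) :
    actF A (F - G) = actF A F - actF A G := by
  ext u; simp [actF]

theorem actF_zero (A : H ≃ₗ[R] H) : actF A (0 : H →ₗ[R] ↥(tSub R H)) = 0 := by
  ext u; simp [actF]

theorem actF_neg (A : H ≃ₗ[R] H) (F : H →ₗ[R] ↥(tSub R H)) :
    actF A (-F) = -actF A F := by
  have h := actF_add A (-F) F
  rw [neg_add_cancel, actF_zero] at h
  exact eq_neg_of_add_eq_zero_left h.symm

/-- The multiplication on `𝒜 = Hom(H, 𝔱) × Hom(H, Λ²H) × GL(H)`: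
`(F', f', A')·(F, f, A) = (F' + A'·F + Υ_{f'} ∘ (A'·f) − Υ_{A'·f} ∘ f', f' + A'·f, A'A)`. -/
noncomputable def aMul (Υ : (H →ₗ[R] ↥(⋀[R]^2 H)) → (↥(⋀[R]^2 H) →ₗ[R] ↥(tSub R H)))
    (x y : (H →ₗ[R] ↥(tSub R H)) × (H →ₗ[R] ↥(⋀[R]^2 H)) × (H ≃ₗ[R] H)) :
    (H →ₗ[R] ↥(tSub R H)) × (H →ₗ[R] ↥(⋀[R]^2 H)) × (H ≃ₗ[R] H) :=
  (x.1 + actF x.2.2 y.1 + Υ x.2.1 ∘ₗ actf x.2.2 y.2.1 - Υ (actf x.2.2 y.2.1) ∘ₗ x.2.1,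
    x.2.1 + actf x.2.2 y.2.1,
    x.2.2 * y.2.2)

section Ups

variable (ν : H →ₗ[R] ↥(⋀[R]^2 H) →ₗ[R] ↥(tSub R H))
variable (Υ : (H →ₗ[R] ↥(⋀[R]^2 H)) → (↥(⋀[R]^2 H) →ₗ[R] ↥(tSub R H)))
variable (hΥ : ∀ (f : H →ₗ[R] ↥(⋀[R]^2 H)) (u v : H),
      Υ f (wedge (R := R) u v) = ν u (f v) - ν v (f u))

include hΥ

theorem Ups_zero : Υ 0 = 0 :=
  hom_ext2 fun u v => by simp [hΥ]

theorem Ups_add (f g : H →ₗ[R] ↥(⋀[R]^2 H)) : Υ (f + g) = Υ f + Υ g :=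
  hom_ext2 fun u v => by
    simp only [hΥ, LinearMap.add_apply, map_add]
    abel

theorem Ups_neg (f : H →ₗ[R] ↥(⋀[R]^2 H)) : Υ (-f) = -Υ f :=
  hom_ext2 fun u v => by
    simp only [hΥ, LinearMap.neg_apply, map_neg]
    abel

variable (hν : ∀ u v w : H,
      (↑(ν u (wedge (R := R) v w)) : H ⊗[R] ↥(⋀[R]^2 H)) =
        ((2 : R) * ⅟(3 : R)) • u ⊗ₜ[R] wedge (R := R) v w -
          ⅟(3 : R) • v ⊗ₜ[R] wedge (R := R) w u -
          ⅟(3 : R) • w ⊗ₜ[R] wedge (R := R) u v)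

include hν

omit hΥ in
theorem nu_equiv (A : H →ₗ[R] H) (u : H) (ξ : ↥(⋀[R]^2 H)) :
    ν (A u) (map2 A ξ) = tRestrict A (ν u ξ) := by
  have h : (ν (A u)) ∘ₗ map2 A = tRestrict A ∘ₗ (ν u) := hom_ext2 fun v w => by
    apply Subtype.ext
    rw [LinearMap.comp_apply, LinearMap.comp_apply, map2_wedge, tRestrict_coe, hν, hν]
    simp [map_sub, TensorProduct.map_tmul, map2_wedge]
  exact LinearMap.congr_fun h ξ

theorem Ups_equiv (A : H ≃ₗ[R] H) (f g : H →ₗ[R] ↥(⋀[R]^2 H)) :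
    Υ (actf A f) ∘ₗ actf A g = actF A (Υ f ∘ₗ g) := by
  have key : Υ (actf A f) ∘ₗ map2 (A : H →ₗ[R] H) = tRestrict (A : H →ₗ[R] H) ∘ₗ Υ f :=
    hom_ext2 fun u v => by
      rw [LinearMap.comp_apply, LinearMap.comp_apply, map2_wedge, hΥ, hΥ, map_sub]
      have e1 : (actf A f) ((A : H →ₗ[R] H) v) = map2 (A : H →ₗ[R] H) (f v) := by
        simp [actf]
      have e2 : (actf A f) ((A : H →ₗ[R] H) u) = map2 (A : H →ₗ[R] H) (f u) := by
        simp [actf]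
      rw [e1, e2, nu_equiv ν hν, nu_equiv ν hν]
  calc Υ (actf A f) ∘ₗ actf A g
      = (Υ (actf A f) ∘ₗ map2 (A : H →ₗ[R] H)) ∘ₗ (g ∘ₗ (A.symm : H →ₗ[R] H)) := by
        simp only [actf, LinearMap.comp_assoc]
    _ = (tRestrict (A : H →ₗ[R] H) ∘ₗ Υ f) ∘ₗ (g ∘ₗ (A.symm : H →ₗ[R] H)) := by rw [key]
    _ = actF A (Υ f ∘ₗ g) := by simp only [actF, LinearMap.comp_assoc]

end Ups

/-- The operation
`(F', f', A')·(F, f, A) = (F' + A'·F + Υ_{f'} ∘ (A'·f) − Υ_{A'·f} ∘ f', f' + A'·f, A'A)` makes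
the set `𝒜 = Hom(H, 𝔱) × Hom(H, Λ²H) × GL(H)` into a group. -/
theorem stmt11 (P : Ideal ℤ) [P.IsPrime] (hP2 : (2 : ℤ) ∉ P) (hP3 : (3 : ℤ) ∉ P)
    [Algebra ℤ R] [IsLocalization.AtPrime R P] {g : ℕ} (hg : 1 ≤ g)
    (e : Module.Basis (Fin (2 * g)) R H)
    (ν : H →ₗ[R] ↥(⋀[R]^2 H) →ₗ[R] ↥(tSub R H))
    (hν : ∀ u v w : H,
      (↑(ν u (wedge (R := R) v w)) : H ⊗[R] ↥(⋀[R]^2 H)) =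
        ((2 : R) * ⅟(3 : R)) • u ⊗ₜ[R] wedge (R := R) v w -
          ⅟(3 : R) • v ⊗ₜ[R] wedge (R := R) w u -
          ⅟(3 : R) • w ⊗ₜ[R] wedge (R := R) u v)
    (Υ : (H →ₗ[R] ↥(⋀[R]^2 H)) → (↥(⋀[R]^2 H) →ₗ[R] ↥(tSub R H)))
    (hΥ : ∀ (f : H →ₗ[R] ↥(⋀[R]^2 H)) (u v : H),
      Υ f (wedge (R := R) u v) = ν u (f v) - ν v (f u)) :
    (∀ x y z, aMul Υ (aMul Υ x y) z = aMul Υ x (aMul Υ y z)) ∧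
    (∃ ε, (∀ x, aMul Υ ε x = x ∧ aMul Υ x ε = x) ∧
      ∀ x, ∃ y, aMul Υ x y = ε ∧ aMul Υ y x = ε) := by
  constructor
  · rintro ⟨F₁, f₁, A₁⟩ ⟨F₂, f₂, A₂⟩ ⟨F₃, f₃, A₃⟩
    simp only [aMul, Prod.mk.injEq]
    refine ⟨?_, ?_, mul_assoc _ _ _⟩
    · simp only [actf_mul, actF_mul, actf_add, actF_add, actF_sub,
        Ups_add ν Υ hΥ, LinearMap.add_comp, LinearMap.comp_add, LinearMap.sub_comp,
        Ups_equiv ν Υ hΥ hν]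
      abel
    · rw [actf_mul, actf_add, add_assoc]
  · refine ⟨(0, 0, 1), fun x => ?_, fun x => ?_⟩
    · obtain ⟨F, f, A⟩ := x
      constructor
      · simp only [aMul, actF_one, actf_one, Ups_zero ν Υ hΥ, LinearMap.zero_comp,
          LinearMap.comp_zero, zero_add, add_zero, sub_zero, one_mul]
      · simp only [aMul, actf_zero, actF_zero, Ups_zero ν Υ hΥ, LinearMap.zero_comp,
          LinearMap.comp_zero, zero_add, add_zero, sub_zero, mul_one]
    · obtain ⟨F, f, A⟩ := x
      refine ⟨(-(actF A⁻¹ F), -(actf A⁻¹ f), A⁻¹), ?_, ?_⟩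
      · simp only [aMul, Prod.mk.injEq, actf_neg, actF_neg, ← actf_mul, ← actF_mul,
          mul_inv_cancel, actf_one, actF_one, Ups_neg ν Υ hΥ, LinearMap.comp_neg,
          LinearMap.neg_comp]
        exact ⟨by abel, by abel, trivial⟩
      · simp only [aMul, Prod.mk.injEq, actf_neg, actF_neg,
          inv_mul_cancel, Ups_neg ν Υ hΥ, LinearMap.comp_neg, LinearMap.neg_comp]
        exact ⟨by abel, by abel, trivial⟩


end A3

end Paper
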